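/- (Mrs. Gerber's Lemma) For each fixed x ∈ [0, log 2], the function y ↦ f₂(x,y) is convex on [0, log 2]; by symmetry, for each fixed y ∈ [0, log 2], the function x ↦ f₂(x,y) is convex on [0, log 2]. -/

import Mathlib

noncomputable def binEnt (p : ℝ) : ℝ := -p * Real.log p - (1 - p) * Real.log (1 - p)

noncomputable def binEntInv (x : ℝ) : ℝ :=
  sInf {p : ℝ | p ∈ Set.Icc (0 : ℝ) (1 / 2) ∧ binEnt p = x}

noncomputable def starOp (p q : ℝ) : ℝ := p * (1 - q) + q * (1 - p)

noncomputable def f₂ (x y : ℝ) : ℝ := binEnt (starOp (binEntInv x) (binEntInv y))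

/-- Shannon entropy (natural log) of a discrete random variable `X` on `(Ω, μ)`. -/
noncomputable def entropy {Ω S : Type*} [MeasurableSpace Ω] (μ : MeasureTheory.Measure Ω)
    (X : Ω → S) : ℝ :=
  ∑' s : S, Real.negMulLog ((μ (X ⁻¹' {s})).toReal)

/-- Conditional Shannon entropy `H(X | U) = H(X, U) - H(U)`. -/
noncomputable def condEntropy {Ω S T : Type*} [MeasurableSpace Ω] (μ : MeasureTheory.Measure Ω)
    (X : Ω → S) (U : Ω → T) : ℝ :=
  entropy μ (fun ω => (X ω, U ω)) - entropy μ U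

/-- Independence of two discrete random variables. -/
def IndepRV {Ω S T : Type*} [MeasurableSpace Ω] (μ : MeasureTheory.Measure Ω)
    (X : Ω → S) (Y : Ω → T) : Prop :=
  ∀ (a : S) (b : T), μ (X ⁻¹' {a} ∩ Y ⁻¹' {b}) = μ (X ⁻¹' {a}) * μ (Y ⁻¹' {b})

/-- Mutual independence of a finite family of discrete random variables. -/
def iIndepRV {Ω G ι : Type*} [Fintype ι] [MeasurableSpace Ω] (μ : MeasureTheory.Measure Ω)
    (X : ι → Ω → G) : Prop :=
  ∀ a : ι → G, μ (⋂ i, X i ⁻¹' {a i}) = ∏ i, μ (X i ⁻¹' {a i})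

/-- `fG G x y` : the minimum entropy `H(X+Y)` over independent `G`-valued random variables
`X, Y` with `H(X) = x` and `H(Y) = y`. -/
noncomputable def fG (G : Type) [AddCommGroup G] (x y : ℝ) : ℝ :=
  sInf { z : ℝ | ∃ (Ω : Type) (_ : MeasurableSpace Ω) (μ : MeasureTheory.Measure Ω),
    MeasureTheory.IsProbabilityMeasure μ ∧ ∃ X Y : Ω → G, IndepRV μ X Y ∧
      entropy μ X = x ∧ entropy μ Y = y ∧ entropy μ (fun ω => X ω + Y ω) = z }

/-- `fGk G k x` : the minimum entropy `H(X₁ + ⋯ + X_k)` over `k` mutually independent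
`G`-valued random variables with `H(Xᵢ) = xᵢ`. -/
noncomputable def fGk (G : Type) [AddCommGroup G] (k : ℕ) (x : Fin k → ℝ) : ℝ :=
  sInf { z : ℝ | ∃ (Ω : Type) (_ : MeasurableSpace Ω) (μ : MeasureTheory.Measure Ω),
    MeasureTheory.IsProbabilityMeasure μ ∧ ∃ X : Fin k → Ω → G, iIndepRV μ X ∧
      (∀ i, entropy μ (X i) = x i) ∧ entropy μ (fun ω => ∑ i, X i ω) = z }

/-- Iterated application `fG G x₁ (fG G x₂ (… (fG G x_{r-1} x_r)…))`. -/
noncomputable def iterFG (G : Type) [AddCommGroup G] : List ℝ → ℝ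
  | [] => 0
  | [a] => a
  | a :: b :: rest => fG G a (iterFG G (b :: rest))


open Real Set

lemma binEnt_eq (p : ℝ) : binEnt p = Real.binEntropy p := by
  simp only [binEnt, Real.binEntropy, Real.log_inv]; ring

lemma binEntInv_spec {x : ℝ} (hx : x ∈ Icc (0:ℝ) (Real.log 2)) :
    binEntInv x ∈ Icc (0:ℝ) (1/2) ∧ Real.binEntropy (binEntInv x) = x := by
  have h2 : Icc (0:ℝ) (1/2) = Icc (0:ℝ) 2⁻¹ := by norm_num
  obtain ⟨p₀, hp₀, hHp₀⟩ : ∃ p ∈ Icc (0:ℝ) 2⁻¹, Real.binEntropy p = x := by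
    have h := intermediate_value_Icc (by norm_num : (0:ℝ) ≤ 2⁻¹)
      Real.binEntropy_continuous.continuousOn
    have hx' : x ∈ Icc (Real.binEntropy 0) (Real.binEntropy 2⁻¹) := by
      simpa using hx
    exact h hx'
  have hset : {p : ℝ | p ∈ Icc (0:ℝ) (1/2) ∧ binEnt p = x} = {p₀} := by
    ext p
    simp only [mem_setOf_eq, mem_singleton_iff]
    constructor
    · rintro ⟨hp, hHp⟩
      rw [binEnt_eq] at hHp
      exact Real.binEntropy_strictMonoOn.injOn (h2 ▸ hp) hp₀ (by rw [hHp, hHp₀])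
    · rintro rfl
      exact ⟨h2 ▸ hp₀, by rw [binEnt_eq, hHp₀]⟩
  rw [binEntInv, hset, csInf_singleton]
  exact ⟨h2 ▸ hp₀, hHp₀⟩

lemma binEntropy_mem {p : ℝ} (hp : p ∈ Icc (0:ℝ) (1/2)) :
    Real.binEntropy p ∈ Icc (0:ℝ) (Real.log 2) :=
  ⟨Real.binEntropy_nonneg hp.1 (by linarith [hp.2]), Real.binEntropy_le_log_two⟩

lemma binEntInv_binEntropy {p : ℝ} (hp : p ∈ Icc (0:ℝ) (1/2)) :
    binEntInv (Real.binEntropy p) = p := by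
  have h2 : Icc (0:ℝ) (1/2) = Icc (0:ℝ) 2⁻¹ := by norm_num
  obtain ⟨h1, hval⟩ := binEntInv_spec (binEntropy_mem hp)
  exact Real.binEntropy_strictMonoOn.injOn (h2 ▸ h1) (h2 ▸ hp) hval

lemma binEntInv_monotoneOn : MonotoneOn binEntInv (Icc (0:ℝ) (Real.log 2)) := by
  intro a ha b hb hab
  by_contra h
  push_neg at h
  have ha' := binEntInv_spec ha
  have hb' := binEntInv_spec hb
  have h2 : Icc (0:ℝ) (1/2) = Icc (0:ℝ) 2⁻¹ := by norm_num
  have := Real.binEntropy_strictMonoOn (h2 ▸ hb'.1) (h2 ▸ ha'.1) h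
  rw [ha'.2, hb'.2] at this
  linarith

noncomputable def invExt (x : ℝ) : ℝ :=
  if x < 0 then x else if x ≤ Real.log 2 then binEntInv x else 1/2 + (x - Real.log 2)

lemma log2_pos : (0:ℝ) < Real.log 2 := Real.log_pos (by norm_num)

lemma invExt_mono : Monotone invExt := by
  have key : ∀ x, ¬ x < 0 → x ≤ Real.log 2 → binEntInv x ∈ Icc (0:ℝ) (1/2) :=
    fun x h1 h2 => (binEntInv_spec ⟨le_of_not_gt h1, h2⟩).1
  intro a b hab
  unfold invExt
  by_cases h1 : a < 0
  · rw [if_pos h1]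
    by_cases h2 : b < 0
    · rw [if_pos h2]; exact hab
    · rw [if_neg h2]
      by_cases h3 : b ≤ Real.log 2
      · rw [if_pos h3]; exact le_trans h1.le (key b h2 h3).1
      · rw [if_neg h3]; have := log2_pos; push_neg at h3; linarith
  · rw [if_neg h1]
    have h1b : ¬ b < 0 := fun h => h1 (lt_of_le_of_lt hab h)
    rw [if_neg h1b]
    by_cases h2 : a ≤ Real.log 2
    · rw [if_pos h2]
      by_cases h3 : b ≤ Real.log 2
      · rw [if_pos h3]
        exact binEntInv_monotoneOn ⟨le_of_not_gt h1, h2⟩ ⟨le_of_not_gt h1b, h3⟩ hab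
      · rw [if_neg h3]; push_neg at h3
        have := (key a h1 h2).2; linarith
    · push_neg at h2
      rw [if_neg (not_le.2 h2), if_neg (by push_neg; linarith : ¬ b ≤ Real.log 2)]
      linarith

lemma invExt_surj : Function.Surjective invExt := by
  intro y
  rcases lt_or_ge y 0 with hy | hy
  · exact ⟨y, by simp [invExt, hy]⟩
  rcases le_or_gt y (1/2) with hy2 | hy2
  · refine ⟨Real.binEntropy y, ?_⟩
    have hmem := binEntropy_mem ⟨hy, hy2⟩
    rw [invExt, if_neg (not_lt.2 hmem.1), if_pos hmem.2]
    exact binEntInv_binEntropy ⟨hy, hy2⟩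
  · refine ⟨Real.log 2 + (y - 1/2), ?_⟩
    have := log2_pos
    rw [invExt, if_neg (by linarith), if_neg (by linarith)]
    ring

lemma binEntInv_continuousOn : ContinuousOn binEntInv (Icc (0:ℝ) (Real.log 2)) := by
  have hcont : Continuous invExt := invExt_mono.continuous_of_surjective invExt_surj
  exact hcont.continuousOn.congr fun x hx => by
    simp only [invExt, if_neg (not_lt.2 hx.1), if_pos hx.2]

lemma binEntInv_mem_Ioo {y : ℝ} (hy : y ∈ Ioo (0:ℝ) (Real.log 2)) :
    binEntInv y ∈ Ioo (0:ℝ) (1/2) := by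
  obtain ⟨⟨h0, h2⟩, hval⟩ := binEntInv_spec (Ioo_subset_Icc_self hy)
  constructor
  · rcases eq_or_lt_of_le h0 with h | h
    · exfalso; rw [← h] at hval; simp at hval; linarith [hy.1]
    · exact h
  · rcases eq_or_lt_of_le h2 with h | h
    · exfalso
      rw [h] at hval
      have : Real.binEntropy (1/2 : ℝ) = Real.log 2 := by
        rw [show (1/2:ℝ) = 2⁻¹ by norm_num, Real.binEntropy_two_inv]
      rw [this] at hval; linarith [hy.2]
    · exact h

lemma binEntInv_hasDerivAt {y : ℝ} (hy : y ∈ Ioo (0:ℝ) (Real.log 2)) :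
    HasDerivAt binEntInv (Real.log (1 - binEntInv y) - Real.log (binEntInv y))⁻¹ y := by
  obtain ⟨hq0, hq2⟩ := binEntInv_mem_Ioo hy
  have hLpos : 0 < Real.log (1 - binEntInv y) - Real.log (binEntInv y) := by
    have := Real.log_lt_log hq0 (by linarith : binEntInv y < 1 - binEntInv y)
    linarith
  apply HasDerivAt.of_local_left_inverse
  · exact binEntInv_continuousOn.continuousAt (Icc_mem_nhds hy.1 hy.2)
  · exact Real.hasDerivAt_binEntropy (ne_of_gt hq0) (by linarith)
  · exact ne_of_gt hLpos
  · filter_upwards [Ioo_mem_nhds hy.1 hy.2] with z hz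
    exact (binEntInv_spec (Ioo_subset_Icc_self hz)).2

noncomputable def psiF (t : ℝ) : ℝ := t * (1 - t) * (Real.log (1 - t) - Real.log t)

lemma psiF_hasDerivAt {t : ℝ} (ht : t ∈ Ioo (0:ℝ) (1/2)) :
    HasDerivAt psiF ((1 - 2*t) * (Real.log (1 - t) - Real.log t) - 1) t := by
  have ht0 : t ≠ 0 := ne_of_gt ht.1
  have ht1 : (1:ℝ) - t ≠ 0 := by have := ht.2; intro h; linarith [h]
  have ht1' : (0:ℝ) < 1 - t := by have := ht.2; linarith
  have hl1 : HasDerivAt (fun t : ℝ => Real.log (1 - t)) ((1-t)⁻¹ * (-1)) t :=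
    (Real.hasDerivAt_log ht1).comp t ((hasDerivAt_id t).const_sub 1)
  have hmul : HasDerivAt (fun t : ℝ => t * (1 - t)) (1 * (1-t) + t * (-1)) t :=
    (hasDerivAt_id t).mul ((hasDerivAt_id t).const_sub 1)
  have := hmul.mul (hl1.sub (Real.hasDerivAt_log ht0))
  refine this.congr_deriv ?_
  simp only [Pi.sub_apply]
  field_simp
  ring

lemma psiF_deriv2 {t : ℝ} (ht : t ∈ Ioo (0:ℝ) (1/2)) :
    HasDerivAt (fun t => (1 - 2*t) * (Real.log (1 - t) - Real.log t) - 1)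
      (-2 * (Real.log (1 - t) - Real.log t) - (1 - 2*t) / (t * (1 - t))) t := by
  have ht0 : t ≠ 0 := ne_of_gt ht.1
  have ht1 : (1:ℝ) - t ≠ 0 := by have := ht.2; intro h; linarith [h]
  have hl1 : HasDerivAt (fun t : ℝ => Real.log (1 - t)) ((1-t)⁻¹ * (-1)) t :=
    (Real.hasDerivAt_log ht1).comp t ((hasDerivAt_id t).const_sub 1)
  have hlin : HasDerivAt (fun t : ℝ => 1 - 2*t) (-2 : ℝ) t := by
    simpa using ((hasDerivAt_id t).const_mul 2).const_sub 1
  have := (hlin.mul (hl1.sub (Real.hasDerivAt_log ht0))).sub_const 1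
  refine this.congr_deriv ?_
  simp only [Pi.sub_apply]
  field_simp
  ring

lemma psiF_concave : ConcaveOn ℝ (Ioc (0:ℝ) (1/2)) psiF := by
  have hint : interior (Ioc (0:ℝ) (1/2)) = Ioo 0 (1/2) := interior_Ioc
  apply concaveOn_of_hasDerivWithinAt2_nonpos (convex_Ioc _ _)
    (f' := fun t => (1 - 2*t) * (Real.log (1 - t) - Real.log t) - 1)
    (f'' := fun t => -2 * (Real.log (1 - t) - Real.log t) - (1 - 2*t) / (t * (1 - t)))
  · intro t ht
    have ht0 : t ≠ 0 := ne_of_gt ht.1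
    have ht1 : (1:ℝ) - t ≠ 0 := by have := ht.2; intro h; linarith [h]
    apply ContinuousAt.continuousWithinAt
    have : ContinuousAt (fun t : ℝ => t * (1 - t) * (Real.log (1 - t) - Real.log t)) t := by
      apply ContinuousAt.mul
      · fun_prop
      · exact ((Real.continuousAt_log ht1).comp (by fun_prop)).sub (Real.continuousAt_log ht0)
    exact this
  · intro t ht
    rw [hint] at ht
    exact (psiF_hasDerivAt ht).hasDerivWithinAt
  · intro t ht
    rw [hint] at ht
    exact (psiF_deriv2 ht).hasDerivWithinAt
  · intro t ht
    rw [hint] at ht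
    have h1 : Real.log t ≤ Real.log (1 - t) :=
      Real.log_le_log ht.1 (by linarith [ht.2])
    have h2 : 0 < t * (1 - t) := mul_pos ht.1 (by linarith [ht.2])
    have h3 : 0 ≤ (1 - 2*t) / (t * (1-t)) := div_nonneg (by linarith [ht.2]) h2.le
    linarith

lemma psiF_half : psiF (1/2) = 0 := by norm_num [psiF]

lemma psiF_ineq {p q : ℝ} (hp : p ∈ Icc (0:ℝ) (1/2)) (hq : q ∈ Ioo (0:ℝ) (1/2)) :
    (1 - 2*p) * psiF q ≤ psiF (p * (1 - q) + q * (1 - p)) := by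
  have h := psiF_concave.2 (mem_Ioc.2 ⟨hq.1, hq.2.le⟩)
    (mem_Ioc.2 ⟨by norm_num, le_refl (1/2:ℝ)⟩)
    (by linarith [hp.2] : (0:ℝ) ≤ 1 - 2*p) (by linarith [hp.1] : (0:ℝ) ≤ 2*p)
    (by ring)
  have he : (1 - 2*p) • q + (2*p) • (1/2 : ℝ) = p * (1 - q) + q * (1 - p) := by
    simp only [smul_eq_mul]; ring
  rw [he, psiF_half] at h
  simpa using h

lemma gerber_convex {p : ℝ} (hp : p ∈ Icc (0:ℝ) (1/2)) :
    ConvexOn ℝ (Icc (0:ℝ) (Real.log 2))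
      (fun y => Real.binEntropy (starOp p (binEntInv y))) := by
  have hint : interior (Icc (0:ℝ) (Real.log 2)) = Ioo 0 (Real.log 2) := interior_Icc
  apply convexOn_of_hasDerivWithinAt2_nonneg (convex_Icc _ _)
    (f' := fun y => (Real.log (1 - starOp p (binEntInv y)) - Real.log (starOp p (binEntInv y)))
      * ((1 - 2*p) * (Real.log (1 - binEntInv y) - Real.log (binEntInv y))⁻¹))
    (f'' := fun y => (1 - 2*p) *
      ((starOp p (binEntInv y)) * (1 - starOp p (binEntInv y)) *
        (Real.log (1 - starOp p (binEntInv y)) - Real.log (starOp p (binEntInv y)))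
       - (1 - 2*p) * ((binEntInv y) * (1 - binEntInv y) *
        (Real.log (1 - binEntInv y) - Real.log (binEntInv y))))
      / ((binEntInv y) * (1 - binEntInv y) * (starOp p (binEntInv y))
          * (1 - starOp p (binEntInv y))
          * (Real.log (1 - binEntInv y) - Real.log (binEntInv y))^3))
  · -- continuity
    apply Real.binEntropy_continuous.comp_continuousOn
    exact (by unfold starOp; fun_prop : Continuous (starOp p)).comp_continuousOn
      binEntInv_continuousOn
  · -- first derivative
    intro y hy
    rw [hint] at hy ⊢
    obtain ⟨hq0, hq2⟩ := binEntInv_mem_Ioo hy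
    set q := binEntInv y with hqdef
    have hs_eq : starOp p q = p + (1 - 2*p) * q := by unfold starOp; ring
    have hs0 : 0 < starOp p q := by rw [hs_eq]; nlinarith [hp.1, hp.2]
    have hs2 : starOp p q ≤ 1/2 := by rw [hs_eq]; nlinarith [hp.1, hp.2]
    have hQ : HasDerivAt binEntInv (Real.log (1 - q) - Real.log q)⁻¹ y :=
      binEntInv_hasDerivAt hy
    have hS : HasDerivAt (fun z => starOp p (binEntInv z))
        ((1 - 2*p) * (Real.log (1 - q) - Real.log q)⁻¹) y := by
      have h1 : (fun z => starOp p (binEntInv z)) = fun z => p + (1 - 2*p) * binEntInv z := by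
        funext z; unfold starOp; ring
      rw [h1]
      exact (hQ.const_mul (1 - 2*p)).const_add p
    have hH : HasDerivAt Real.binEntropy
        (Real.log (1 - starOp p q) - Real.log (starOp p q)) (starOp p q) :=
      Real.hasDerivAt_binEntropy (ne_of_gt hs0) (by linarith)
    exact ((hH.comp y hS).hasDerivWithinAt)
  · -- second derivative
    intro y hy
    rw [hint] at hy ⊢
    obtain ⟨hq0, hq2⟩ := binEntInv_mem_Ioo hy
    set q := binEntInv y with hqdef
    have hq1 : q < 1 := by linarith
    have hs_eq : starOp p q = p + (1 - 2*p) * q := by unfold starOp; ring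
    have hs0 : 0 < starOp p q := by rw [hs_eq]; nlinarith [hp.1, hp.2]
    have hs2 : starOp p q ≤ 1/2 := by rw [hs_eq]; nlinarith [hp.1, hp.2]
    have hs1 : starOp p q < 1 := by linarith
    set s := starOp p q with hsdef
    have hLq : 0 < Real.log (1 - q) - Real.log q := by
      have := Real.log_lt_log hq0 (by linarith : q < 1 - q); linarith
    have hQ : HasDerivAt binEntInv (Real.log (1 - q) - Real.log q)⁻¹ y :=
      binEntInv_hasDerivAt hy
    have hS : HasDerivAt (fun z => starOp p (binEntInv z))
        ((1 - 2*p) * (Real.log (1 - q) - Real.log q)⁻¹) y := by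
      have h1 : (fun z => starOp p (binEntInv z)) = fun z => p + (1 - 2*p) * binEntInv z := by
        funext z; unfold starOp; ring
      rw [h1]
      exact (hQ.const_mul (1 - 2*p)).const_add p
    -- derivative of z ↦ log (1 - S z) - log (S z)
    have hLS : HasDerivAt
        (fun z => Real.log (1 - starOp p (binEntInv z)) - Real.log (starOp p (binEntInv z)))
        ((1 - s)⁻¹ * (-((1 - 2*p) * (Real.log (1 - q) - Real.log q)⁻¹))
          - s⁻¹ * ((1 - 2*p) * (Real.log (1 - q) - Real.log q)⁻¹)) y := by
      have h1 : HasDerivAt (fun z => Real.log (1 - starOp p (binEntInv z)))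
          ((1 - s)⁻¹ * (-((1 - 2*p) * (Real.log (1 - q) - Real.log q)⁻¹))) y := by
        have := (Real.hasDerivAt_log (by linarith : (1:ℝ) - s ≠ 0)).comp y (hS.const_sub 1)
        simpa [Function.comp_def] using this
      have h2 : HasDerivAt (fun z => Real.log (starOp p (binEntInv z)))
          (s⁻¹ * ((1 - 2*p) * (Real.log (1 - q) - Real.log q)⁻¹)) y := by
        have := (Real.hasDerivAt_log (ne_of_gt hs0)).comp y hS
        simpa [Function.comp_def] using this
      exact h1.sub h2
    have hLQ : HasDerivAt
        (fun z => Real.log (1 - binEntInv z) - Real.log (binEntInv z))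
        ((1 - q)⁻¹ * (-(Real.log (1 - q) - Real.log q)⁻¹)
          - q⁻¹ * (Real.log (1 - q) - Real.log q)⁻¹) y := by
      have h1 : HasDerivAt (fun z => Real.log (1 - binEntInv z))
          ((1 - q)⁻¹ * (-(Real.log (1 - q) - Real.log q)⁻¹)) y := by
        have := (Real.hasDerivAt_log (by linarith : (1:ℝ) - q ≠ 0)).comp y (hQ.const_sub 1)
        simpa [Function.comp_def] using this
      have h2 : HasDerivAt (fun z => Real.log (binEntInv z))
          (q⁻¹ * (Real.log (1 - q) - Real.log q)⁻¹) y := by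
        have := (Real.hasDerivAt_log (ne_of_gt hq0)).comp y hQ
        simpa [Function.comp_def] using this
      exact h1.sub h2
    have hinv := hLQ.inv (ne_of_gt hLq)
    have hprod := hLS.mul ((hinv.const_mul (1 - 2*p)))
    have hfinal : HasDerivAt
        (fun z => (Real.log (1 - starOp p (binEntInv z)) - Real.log (starOp p (binEntInv z)))
          * ((1 - 2*p) * (Real.log (1 - binEntInv z) - Real.log (binEntInv z))⁻¹))
        ((1 - 2*p) * (s * (1 - s) * (Real.log (1 - s) - Real.log s)
            - (1 - 2*p) * (q * (1 - q) * (Real.log (1 - q) - Real.log q)))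
          / (q * (1 - q) * s * (1 - s) * (Real.log (1 - q) - Real.log q)^3)) y := by
      refine hprod.congr_deriv ?_
      have h1q : (1:ℝ) - q ≠ 0 := by linarith
      have h1s : (1:ℝ) - s ≠ 0 := by linarith
      simp only [Pi.sub_apply, Pi.inv_apply, ← hqdef, ← hsdef]
      field_simp
      ring
    exact hfinal.hasDerivWithinAt
  · -- nonnegativity
    intro y hy
    rw [hint] at hy
    obtain ⟨hq0, hq2⟩ := binEntInv_mem_Ioo hy
    set q := binEntInv y with hqdef
    have hs_eq : starOp p q = p + (1 - 2*p) * q := by unfold starOp; ring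
    have hs0 : 0 < starOp p q := by rw [hs_eq]; nlinarith [hp.1, hp.2]
    have hs2 : starOp p q ≤ 1/2 := by rw [hs_eq]; nlinarith [hp.1, hp.2]
    have hLq : 0 < Real.log (1 - q) - Real.log q := by
      have := Real.log_lt_log hq0 (by linarith : q < 1 - q); linarith
    apply div_nonneg
    · have hkey := psiF_ineq hp ⟨hq0, hq2⟩
      simp only [psiF] at hkey
      have : starOp p q = p * (1 - q) + q * (1 - p) := rfl
      rw [← this] at hkey
      have h2p : (0:ℝ) ≤ 1 - 2*p := by linarith [hp.2]
      nlinarith [hkey]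
    · have : 0 < q * (1 - q) * starOp p q * (1 - starOp p q)
          * (Real.log (1 - q) - Real.log q)^3 := by
        apply mul_pos
        apply mul_pos
        apply mul_pos
        · exact mul_pos hq0 (by linarith)
        · exact hs0
        · linarith
        · positivity
      linarith

/-- **Mrs. Gerber's Lemma.** For each fixed `x ∈ [0, log 2]`, `y ↦ f₂ x y` is convex on
`[0, log 2]`, and symmetrically for each fixed `y`, `x ↦ f₂ x y` is convex on `[0, log 2]`. -/
theorem mrs_gerbers_lemma :
    (∀ x ∈ Set.Icc (0 : ℝ) (Real.log 2),
      ConvexOn ℝ (Set.Icc (0 : ℝ) (Real.log 2)) (fun y => f₂ x y)) ∧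
    (∀ y ∈ Set.Icc (0 : ℝ) (Real.log 2),
      ConvexOn ℝ (Set.Icc (0 : ℝ) (Real.log 2)) (fun x => f₂ x y)) := by
  have hstar : ∀ a b : ℝ, starOp a b = starOp b a := fun a b => by unfold starOp; ring
  constructor
  · intro x hx
    have hp := (binEntInv_spec hx).1
    have he : (fun y => f₂ x y)
        = fun y => Real.binEntropy (starOp (binEntInv x) (binEntInv y)) := by
      funext y; rw [f₂, binEnt_eq]
    rw [he]; exact gerber_convex hp
  · intro y hy
    have hp := (binEntInv_spec hy).1
    have he : (fun x => f₂ x y)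
        = fun x => Real.binEntropy (starOp (binEntInv y) (binEntInv x)) := by
      funext x; rw [f₂, binEnt_eq, hstar]
    rw [he]; exact gerber_convex hp
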